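/- arXiv:1108.3277 — 7 statements merged into one kernel-verified Lean document; each statement's English description precedes it below -/
import Mathlib

section
/- Let R be a ring. Then every finitely generated essential extension of a simple left R-module is Artinian if and only if every left R-module is a subdirect product of locally Artinian modules. -/
universe u v

/-- A module is locally Artinian if all its finitely generated submodules are Artinian. -/
def LocallyArtinian (R : Type u) (M : Type v) [Ring R] [AddCommGroup M] [Module R M] : Prop :=
  ∀ N : Submodule R M, N.FG → IsArtinian R N

/-- Property (◇): every finitely generated essential extension of a simple left module
is Artinian. -/
def Diamond (R : Type u) [Ring R] : Prop :=
  ∀ (M : Type v) [AddCommGroup M] [Module R M], Module.Finite R M →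
    ∀ E : Submodule R M, IsSimpleModule R E →
      (∀ N : Submodule R M, N ≠ ⊥ → N ⊓ E ≠ ⊥) → IsArtinian R M

section Aux

variable {R : Type u} [Ring R] {M : Type v} [AddCommGroup M] [Module R M]

/-- Zorn: a submodule maximal with respect to not containing `m`. -/
theorem exists_maximal_not_mem {m : M} (hm0 : m ≠ 0) :
    ∃ K : Submodule R M, m ∉ K ∧ ∀ K' : Submodule R M, K ≤ K' → m ∉ K' → K' = K := by
  have ih : ∀ c ⊆ {K : Submodule R M | m ∉ K}, IsChain (· ≤ ·) c →
      ∃ ub ∈ {K : Submodule R M | m ∉ K}, ∀ z ∈ c, z ≤ ub := by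
    intro c hc hchain
    rcases c.eq_empty_or_nonempty with rfl | hne
    · exact ⟨⊥, by simpa using hm0, by simp⟩
    · refine ⟨sSup c, ?_, fun z hz => le_sSup hz⟩
      intro hm
      rw [Submodule.mem_sSup_of_directed hne hchain.directedOn] at hm
      obtain ⟨K, hKc, hmK⟩ := hm
      exact hc hKc hmK
  obtain ⟨K, hK⟩ := zorn_le₀ _ ih
  exact ⟨K, hK.prop, fun K' hle hK' => le_antisymm (hK.2 hK' hle) hle⟩

/-- Every nonzero submodule of `M ⧸ K` contains the image of `m`, where `K` is maximal
with respect to `m ∉ K`. -/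
theorem mkQ_mem_of_ne_bot {K : Submodule R M} {m : M} (hm : m ∉ K)
    (hmax : ∀ K' : Submodule R M, K ≤ K' → m ∉ K' → K' = K)
    {P : Submodule R (M ⧸ K)} (hP : P ≠ ⊥) : K.mkQ m ∈ P := by
  by_contra hmem
  have hle : K ≤ P.comap K.mkQ := fun x hx => by
    simp only [Submodule.mem_comap, Submodule.mkQ_apply,
      (Submodule.Quotient.mk_eq_zero K).2 hx]
    exact P.zero_mem
  have hKK : P.comap K.mkQ = K := hmax _ hle hmem
  apply hP
  rw [eq_bot_iff]
  intro y hy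
  obtain ⟨x, rfl⟩ := K.mkQ_surjective y
  have hxK : x ∈ K := by rw [← hKK]; exact hy
  simpa [Submodule.mem_bot, Submodule.mkQ_apply] using
    (Submodule.Quotient.mk_eq_zero K).2 hxK

end Aux

/-- a ring `R` has property (◇) iff every left `R`-module is a subdirect
product of locally Artinian modules. -/
theorem diamond_iff_subdirect (R : Type u) [Ring R] :
    Diamond.{u, v} R ↔
      ∀ (M : Type v) [AddCommGroup M] [Module R M],
        ∃ (ι : Type v) (F : ι → ModuleCat.{v} R) (φ : M →ₗ[R] ((i : ι) → F i)),
          Function.Injective φ ∧ (∀ i, Function.Surjective (fun m => φ m i)) ∧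
            ∀ i, LocallyArtinian R (F i) := by
  constructor
  · intro hD M _ _
    choose K hK1 hK2 using fun i : {x : M // x ≠ 0} =>
      exists_maximal_not_mem (R := R) i.2
    refine ⟨{x : M // x ≠ 0}, fun i => ModuleCat.of R (M ⧸ K i),
      LinearMap.pi fun i => (K i).mkQ, ?_, ?_, ?_⟩
    · rw [← LinearMap.ker_eq_bot, eq_bot_iff]
      intro x hx
      simp only [LinearMap.mem_ker] at hx
      by_contra hx0
      have hx0' : x ≠ 0 := fun h => hx0 (h ▸ Submodule.zero_mem _)
      have := congrFun hx ⟨x, hx0'⟩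
      simp only [LinearMap.pi_apply, Pi.zero_apply, Submodule.mkQ_apply] at this
      exact hK1 ⟨x, hx0'⟩ ((Submodule.Quotient.mk_eq_zero _).1 this)
    · intro i
      exact (K i).mkQ_surjective
    · -- each quotient is locally Artinian
      intro i N hN
      rcases eq_or_ne N ⊥ with rfl | hNbot
      · infer_instance
      · set E : Submodule R (M ⧸ K i) := Submodule.span R {(K i).mkQ i.1} with hE
        have hEle : ∀ P : Submodule R (M ⧸ K i), P ≠ ⊥ → E ≤ P := by
          intro P hP
          rw [hE, Submodule.span_le, Set.singleton_subset_iff]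
          exact mkQ_mem_of_ne_bot (hK1 i) (hK2 i) hP
        have hEbot : E ≠ ⊥ := by
          intro h
          apply hK1 i
          have : (K i).mkQ i.1 ∈ E := Submodule.mem_span_singleton_self _
          rw [h] at this
          exact (Submodule.Quotient.mk_eq_zero _).1 this
        have hEN : E ≤ N := hEle N hNbot
        have hfin : Module.Finite R N := Module.Finite.iff_fg.2 hN
        set E' : Submodule R N := E.comap N.subtype with hE'
        have hatom : IsAtom E := by
          refine ⟨hEbot, fun b hb => ?_⟩
          by_contra hbbot
          exact hb.ne (le_antisymm hb.le (hEle b hbbot))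
        have hsimple : IsSimpleModule R E' := by
          have hsE : IsSimpleModule R E := isSimpleModule_iff_isAtom.2 hatom
          exact (LinearMap.isSimpleModule_iff_of_bijective
            (Submodule.comapSubtypeEquivOfLe hEN).toLinearMap
            (Submodule.comapSubtypeEquivOfLe hEN).bijective).2 hsE
        have hE'bot : E' ≠ ⊥ := (isSimpleModule_iff_isAtom.1 hsimple).1
        have hess : ∀ P : Submodule R N, P ≠ ⊥ → P ⊓ E' ≠ ⊥ := by
          intro P hP
          have hmap : P.map N.subtype ≠ ⊥ := by
            intro h
            exact hP (Submodule.map_injective_of_injective N.injective_subtype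
              (by rw [h, Submodule.map_bot]))
          have hle : E ≤ P.map N.subtype := hEle _ hmap
          have hE'P : E' ≤ P := by
            rw [hE']
            calc E.comap N.subtype ≤ (P.map N.subtype).comap N.subtype :=
                  Submodule.comap_mono hle
              _ = P := Submodule.comap_map_eq_of_injective N.injective_subtype P
          rw [inf_eq_right.2 hE'P]
          exact hE'bot
        exact hD N hfin E' hsimple hess
  · intro h M _ _ hMfin E hEsimple hEess
    obtain ⟨ι, F, φ, hinj, _, hla⟩ := h M
    have hatom : IsAtom E := isSimpleModule_iff_isAtom.1 hEsimple
    obtain ⟨i, hi⟩ : ∃ i, LinearMap.ker ((LinearMap.proj i).comp φ) ⊓ E = ⊥ := by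
      by_contra hcon
      push_neg at hcon
      have hle : ∀ i, E ≤ LinearMap.ker ((LinearMap.proj i).comp φ) := by
        intro i
        have h1 : LinearMap.ker ((LinearMap.proj i).comp φ) ⊓ E ≤ E := inf_le_right
        have heq : LinearMap.ker ((LinearMap.proj i).comp φ) ⊓ E = E := by
          rcases h1.lt_or_eq with hlt | heq
          · exact absurd (hatom.2 _ hlt) (hcon i)
          · exact heq
        calc E = LinearMap.ker ((LinearMap.proj i).comp φ) ⊓ E := heq.symm
          _ ≤ LinearMap.ker ((LinearMap.proj i).comp φ) := inf_le_left
      obtain ⟨x, hxE, hx0⟩ := (Submodule.ne_bot_iff E).1 hatom.1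
      apply hx0
      apply hinj
      rw [map_zero]
      funext j
      exact hle j hxE
    set ψ : M →ₗ[R] F i := (LinearMap.proj i).comp φ with hψ
    have hker : LinearMap.ker ψ = ⊥ := by
      by_contra hk
      exact hEess _ hk hi
    have hinj' : Function.Injective ψ := LinearMap.ker_eq_bot.1 hker
    have hrangefg : (LinearMap.range ψ).FG := by
      rw [← Submodule.map_top]
      exact Submodule.FG.map _ (Module.finite_def.1 hMfin)
    have : IsArtinian R (LinearMap.range ψ) := hla i _ hrangefg
    exact isArtinian_of_injective ψ.rangeRestrict
      (fun a b hab => hinj' (congrArg Subtype.val hab))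
end

section
/- Let A be a Noetherian algebra, E a simple left A-module, and E ≤ M an essential extension. Suppose x is a normal element of A (i.e. xA = Ax) with x ∈ Ann_A(E), and suppose there exists n > 0 with xⁿM = 0. Then M is Artinian if and only if Ann_M(x) = {m ∈ M | xm = 0} is Artinian. -/
/-- let `A` be a Noetherian algebra, `E ≤ M` an essential extension of a
simple module, `x` a normal element of `A` annihilating `E` with `xⁿM = 0` for some
`n > 0`.  Then `M` is Artinian iff `Ann_M(x) = {m | x • m = 0}` is Artinian. -/
theorem artinian_iff_ann_artinian
    (A : Type*) [Ring A] [Algebra ℂ A] [IsNoetherianRing A]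
    (M : Type*) [AddCommGroup M] [Module A M]
    (E : Submodule A M) (hE : IsSimpleModule A E)
    (hess : ∀ N : Submodule A M, N ≠ ⊥ → N ⊓ E ≠ ⊥)
    (x : A)
    (hnormal : (∀ a : A, ∃ b : A, x * a = b * x) ∧ (∀ a : A, ∃ b : A, a * x = x * b))
    (hann : ∀ e ∈ E, x • e = 0)
    (n : ℕ) (hn : 0 < n) (hnil : ∀ m : M, x ^ n • m = 0)
    (M' : Submodule A M) (hM' : ∀ m : M, m ∈ M' ↔ x • m = 0) :
    IsArtinian A M ↔ IsArtinian A M' := by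
  constructor
  · intro h
    exact inferInstance
  · intro hM'art
    -- powers of x are normal
    have hpow : ∀ i : ℕ, ∀ a : A, ∃ b : A, x ^ i * a = b * x ^ i := by
      intro i
      induction i with
      | zero => intro a; exact ⟨a, by simp⟩
      | succ i ih =>
        intro a
        obtain ⟨b, hb⟩ := ih a
        obtain ⟨c, hc⟩ := hnormal.1 b
        refine ⟨c, ?_⟩
        rw [pow_succ', mul_assoc, hb, ← mul_assoc, hc, mul_assoc, ← pow_succ']
    -- the kernel filtration
    set K : ℕ → Submodule A M := fun i =>
      { carrier := {m | x ^ i • m = 0}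
        add_mem' := fun ha hb => by
          simp only [Set.mem_setOf_eq] at *
          rw [smul_add, ha, hb, add_zero]
        zero_mem' := by simp
        smul_mem' := by
          intro a m hm
          simp only [Set.mem_setOf_eq] at *
          obtain ⟨b, hb⟩ := hpow i a
          rw [← mul_smul, hb, mul_smul, hm, smul_zero] } with hK
    have hKmem : ∀ i (m : M), m ∈ K i ↔ x ^ i • m = 0 := fun i m => Iff.rfl
    -- each K i is Artinian
    have hart : ∀ i : ℕ, IsArtinian A (K i) → IsArtinian A (K (i + 1)) := by
      intro i hi
      -- "x • N" as a submodule of M, for N a submodule of K (i+1)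
      set xIm : Submodule A (K (i + 1)) → Submodule A M := fun N =>
        { carrier := {m | ∃ y ∈ N.map (K (i + 1)).subtype, x • y = m}
          add_mem' := by
            rintro _ _ ⟨y, hy, rfl⟩ ⟨z, hz, rfl⟩
            exact ⟨y + z, add_mem hy hz, by rw [smul_add]⟩
          zero_mem' := ⟨0, zero_mem _, smul_zero x⟩
          smul_mem' := by
            rintro a _ ⟨y, hy, rfl⟩
            obtain ⟨b, hb⟩ := hnormal.2 a
            refine ⟨b • y, Submodule.smul_mem _ b hy, ?_⟩
            rw [← mul_smul, ← hb, mul_smul] } with hxIm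
      have hxImMem : ∀ N m, m ∈ xIm N ↔ ∃ y ∈ N.map (K (i + 1)).subtype, x • y = m :=
        fun N m => Iff.rfl
      have hxImLe : ∀ N, xIm N ≤ K i := by
        rintro N _ ⟨y, hy, rfl⟩
        obtain ⟨⟨y, hyK⟩, _, rfl⟩ := hy
        show x ^ i • x • y = 0
        rw [← mul_smul, ← pow_succ]
        exact hyK
      have hinfLe : ∀ N : Submodule A (K (i + 1)),
          N.map (K (i + 1)).subtype ⊓ M' ≤ M' := fun N => inf_le_right
      set Φ : Submodule A (K (i + 1)) → Submodule A M' × Submodule A (K i) := fun N =>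
        ((N.map (K (i + 1)).subtype ⊓ M').comap M'.subtype,
          (xIm N).comap (K i).subtype) with hΦ
      have hxImMono : Monotone xIm := by
        rintro N N' hNN' _ ⟨y, hy, rfl⟩
        exact ⟨y, Submodule.map_mono hNN' hy, rfl⟩
      have hmono : Monotone Φ := by
        intro N N' hNN'
        constructor
        · exact Submodule.comap_mono (inf_le_inf_right _ (Submodule.map_mono hNN'))
        · exact Submodule.comap_mono (hxImMono hNN')
      have hΦstrict : StrictMono Φ := by
        intro N N' hNN'
        refine lt_of_le_of_ne (hmono hNN'.le) (fun heq => ?_)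
        -- derive N' ≤ N, contradiction
        have h1 := congrArg Prod.fst heq
        have h2 := congrArg Prod.snd heq
        simp only [hΦ] at h1 h2
        have hN'leN : N' ≤ N := by
          rintro ⟨m', hm'K⟩ hm'
          -- x • m' ∈ xIm N' = xIm N
          have hx2 : ∀ m : M, m ∈ xIm N ↔ m ∈ xIm N' := by
            intro m
            by_cases hmK : m ∈ K i
            · have := Submodule.ext_iff.mp h2 ⟨m, hmK⟩
              simpa [Submodule.mem_comap] using this
            · constructor
              · intro h; exact absurd (hxImLe N h) hmK
              · intro h; exact absurd (hxImLe N' h) hmK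
          have hxm' : x • m' ∈ xIm N :=
            (hx2 _).mpr ⟨m', ⟨⟨m', hm'K⟩, hm', rfl⟩, rfl⟩
          obtain ⟨y, hy, hxy⟩ := hxm'
          -- m' - y is killed by x and lies in N'-image
          have hsub : m' - y ∈ M' := by
            rw [hM', smul_sub, hxy, sub_self]
          have hNleN' : N.map (K (i + 1)).subtype ≤ N'.map (K (i + 1)).subtype :=
            Submodule.map_mono hNN'.le
          have hsubN' : m' - y ∈ N'.map (K (i + 1)).subtype := by
            refine sub_mem ⟨⟨m', hm'K⟩, hm', rfl⟩ (hNleN' hy)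
          -- first-component equality: N'img ⊓ M' = Nimg ⊓ M'
          have h1' := Submodule.ext_iff.mp h1 ⟨m' - y, hsub⟩
          simp only [Submodule.mem_comap, Submodule.coe_subtype, Submodule.mem_inf] at h1'
          have hsubN : m' - y ∈ N.map (K (i + 1)).subtype :=
            (h1'.mpr ⟨hsubN', hsub⟩).1
          have hm'N : m' ∈ N.map (K (i + 1)).subtype := by
            have := add_mem hsubN hy
            rwa [sub_add_cancel] at this
          obtain ⟨⟨z, hzK⟩, hz, hzeq⟩ := hm'N
          have : (⟨z, hzK⟩ : K (i + 1)) = ⟨m', hm'K⟩ := Subtype.ext hzeq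
          rwa [this] at hz
        exact absurd hN'leN (not_le_of_gt hNN')
      have : WellFoundedLT (Submodule A M' × Submodule A (K i)) := by
        have := hi
        have := hM'art
        infer_instance
      exact hΦstrict.wellFoundedLT
    have hK0 : IsArtinian A (K 0) := by
      have : Subsingleton (K 0) := by
        constructor
        rintro ⟨a, ha⟩ ⟨b, hb⟩
        have ha' : a = 0 := by have := (hKmem 0 a).mp ha; simpa using this
        have hb' : b = 0 := by have := (hKmem 0 b).mp hb; simpa using this
        simp [ha', hb']
      infer_instance
    have hKall : ∀ i, IsArtinian A (K i) := by
      intro i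
      induction i with
      | zero => exact hK0
      | succ i ih => exact hart i ih
    have hKn : K n = ⊤ := by
      rw [eq_top_iff]
      intro m _
      exact hnil m
    have := hKall n
    rw [hKn] at this
    exact isArtinian_of_linearEquiv (Submodule.topEquiv : (⊤ : Submodule A M) ≃ₗ[A] M)
end

section
/- Let A be an algebra over a field k such that every finitely generated essential extension of a simple left A-module is Artinian, and let C be a finite-dimensional k-algebra. Then every finitely generated essential extension of a simple left (C ⊗ A)-module is Artinian. -/
universe u v w

open TensorProduct

section Centralizing

variable {A : Type*} {R : Type*} [Ring A] [Ring R] (f : A →+* R)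
variable {M : Type*} [AddCommGroup M] [Module R M] [Module A M]
variable {n : ℕ} (y : Fin n → R)

/-- The largest `R`-submodule contained in an `A`-submodule `P`. -/
def troughSub (P : Submodule A M) : Submodule R M where
  carrier := {m | ∀ r : R, r • m ∈ P}
  zero_mem' := fun r => by rw [smul_zero]; exact P.zero_mem
  add_mem' := fun {a b} ha hb r => by rw [smul_add]; exact P.add_mem (ha r) (hb r)
  smul_mem' := fun r' m hm r => by rw [← mul_smul]; exact hm (r * r')

theorem mem_troughSub {P : Submodule A M} {m : M} :
    m ∈ troughSub (R := R) P ↔ ∀ r : R, r • m ∈ P := Iff.rfl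

theorem troughSub_le {P : Submodule A M} {m : M} (hm : m ∈ troughSub (R := R) P) :
    m ∈ P := by
  have := hm 1
  rwa [one_smul] at this

theorem ycomm (hsm : ∀ (a : A) (m : M), a • m = f a • m)
    (hc : ∀ (i : Fin n) (a : A), f a * y i = y i * f a)
    (i : Fin n) (a : A) (m : M) : y i • a • m = a • y i • m := by
  calc y i • a • m = y i • f a • m := by rw [hsm]
    _ = (y i * f a) • m := (mul_smul _ _ _).symm
    _ = (f a * y i) • m := by rw [hc]
    _ = f a • y i • m := mul_smul _ _ _
    _ = a • y i • m := by rw [← hsm]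

theorem mem_troughSub_of (hsm : ∀ (a : A) (m : M), a • m = f a • m)
    (hy : ∀ r : R, ∃ a : Fin n → A, r = ∑ i, f (a i) * y i)
    {P : Submodule A M} {m : M} (h : ∀ i, y i • m ∈ P) :
    m ∈ troughSub (R := R) P := by
  intro r
  obtain ⟨a, rfl⟩ := hy r
  rw [Finset.sum_smul]
  refine Submodule.sum_mem _ fun i _ => ?_
  rw [mul_smul, ← hsm]
  exact P.smul_mem _ (h i)

/-- An `R`-submodule viewed as an `A`-submodule. -/
def toA (hsm : ∀ (a : A) (m : M), a • m = f a • m) (N : Submodule R M) : Submodule A M where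
  carrier := N
  zero_mem' := N.zero_mem
  add_mem' := fun ha hb => N.add_mem ha hb
  smul_mem' := fun a m hm => by
    show a • m ∈ N
    rw [hsm]
    exact N.smul_mem _ hm

theorem mem_toA {hsm : ∀ (a : A) (m : M), a • m = f a • m} {N : Submodule R M} {m : M} :
    m ∈ toA f hsm N ↔ m ∈ N := Iff.rfl

theorem toA_injective (hsm : ∀ (a : A) (m : M), a • m = f a • m) :
    Function.Injective (toA f hsm) := by
  intro N N' h
  ext x
  constructor
  · intro hx
    have : x ∈ toA f hsm N' := h ▸ (show x ∈ toA f hsm N from hx)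
    exact this
  · intro hx
    have : x ∈ toA f hsm N := h.symm ▸ (show x ∈ toA f hsm N' from hx)
    exact this

theorem span_smul_top (hsm : ∀ (a : A) (m : M), a • m = f a • m)
    (hc : ∀ (i : Fin n) (a : A), f a * y i = y i * f a)
    (hy : ∀ r : R, ∃ a : Fin n → A, r = ∑ i, f (a i) * y i)
    {m' : ℕ} (g : Fin m' → M) (hg : Submodule.span R (Set.range g) = ⊤) :
    Submodule.span A (Set.range fun p : Fin n × Fin m' => y p.1 • g p.2) = ⊤ := by
  set T := Submodule.span A (Set.range fun p : Fin n × Fin m' => y p.1 • g p.2) with hT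
  have hgen : ∀ (i : Fin n) (l : Fin m'), y i • g l ∈ T :=
    fun i l => Submodule.subset_span ⟨(i, l), rfl⟩
  have hmul : ∀ (r : R) (l : Fin m'), r • g l ∈ T := by
    intro r l
    obtain ⟨a, rfl⟩ := hy r
    rw [Finset.sum_smul]
    refine Submodule.sum_mem _ fun i _ => ?_
    rw [mul_smul, ← hsm]
    exact T.smul_mem _ (hgen i l)
  have hTy : ∀ (i : Fin n) (x : M), x ∈ T → y i • x ∈ T := by
    intro i x hx
    induction hx using Submodule.span_induction with
    | mem x hxs =>
      obtain ⟨⟨j, l⟩, rfl⟩ := hxs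
      rw [← mul_smul]
      exact hmul _ l
    | zero => rw [smul_zero]; exact T.zero_mem
    | add u v hu hv ihu ihv => rw [smul_add]; exact T.add_mem ihu ihv
    | smul a u hu ihu => rw [ycomm f y hsm hc]; exact T.smul_mem a ihu
  have hTr : ∀ (r : R) (x : M), x ∈ T → r • x ∈ T := by
    intro r x hx
    obtain ⟨a, rfl⟩ := hy r
    rw [Finset.sum_smul]
    refine Submodule.sum_mem _ fun i _ => ?_
    rw [mul_smul, ← hsm]
    exact T.smul_mem _ (hTy i x hx)
  rw [eq_top_iff]
  rintro m -
  have hm : m ∈ Submodule.span R (Set.range g) := by rw [hg]; trivial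
  induction hm using Submodule.span_induction with
  | mem x hxs =>
    obtain ⟨l, rfl⟩ := hxs
    have := hmul 1 l
    rwa [one_smul] at this
  | zero => exact T.zero_mem
  | add u v hu hv ihu ihv => exact T.add_mem ihu ihv
  | smul r u hu ihu => exact hTr r u ihu

theorem toA_eq_span (hsm : ∀ (a : A) (m : M), a • m = f a • m)
    (hc : ∀ (i : Fin n) (a : A), f a * y i = y i * f a)
    (hy : ∀ r : R, ∃ a : Fin n → A, r = ∑ i, f (a i) * y i)
    {E : Submodule R M} (hE : IsAtom E) {e : M} (heE : e ∈ E) (he : e ≠ 0) :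
    toA f hsm E = Submodule.span A (Set.range fun i : Fin n => y i • e) := by
  set T := Submodule.span A (Set.range fun i : Fin n => y i • e) with hT
  have hgen : ∀ i : Fin n, y i • e ∈ T := fun i => Submodule.subset_span ⟨i, rfl⟩
  have hmul : ∀ r : R, r • e ∈ T := by
    intro r
    obtain ⟨a, rfl⟩ := hy r
    rw [Finset.sum_smul]
    refine Submodule.sum_mem _ fun i _ => ?_
    rw [mul_smul, ← hsm]
    exact T.smul_mem _ (hgen i)
  have hTy : ∀ (i : Fin n) (x : M), x ∈ T → y i • x ∈ T := by
    intro i x hx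
    induction hx using Submodule.span_induction with
    | mem x hxs =>
      obtain ⟨j, rfl⟩ := hxs
      rw [← mul_smul]
      exact hmul _
    | zero => rw [smul_zero]; exact T.zero_mem
    | add u v hu hv ihu ihv => rw [smul_add]; exact T.add_mem ihu ihv
    | smul a u hu ihu => rw [ycomm f y hsm hc]; exact T.smul_mem a ihu
  have hTr : ∀ (r : R) (x : M), x ∈ T → r • x ∈ T := by
    intro r x hx
    obtain ⟨a, rfl⟩ := hy r
    rw [Finset.sum_smul]
    refine Submodule.sum_mem _ fun i _ => ?_
    rw [mul_smul, ← hsm]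
    exact T.smul_mem _ (hTy i x hx)
  let W : Submodule R M :=
    { carrier := T
      zero_mem' := T.zero_mem
      add_mem' := fun ha hb => T.add_mem ha hb
      smul_mem' := fun r m hm => hTr r m hm }
  have heW : e ∈ W := by
    have := hmul 1
    rwa [one_smul] at this
  have hWle : W ≤ E := by
    intro x hx
    have hle : T ≤ toA f hsm E := by
      rw [Submodule.span_le]
      rintro _ ⟨i, rfl⟩
      exact E.smul_mem _ heE
    exact hle hx
  have hWE : W = E := by
    rcases lt_or_eq_of_le hWle with hlt | hEq
    · exact absurd (hE.2 W hlt) (fun hbot => he (by rw [hbot] at heW; simpa using heW))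
    · exact hEq
  apply le_antisymm
  · intro x hx
    have hxE : x ∈ E := hx
    rw [← hWE] at hxE
    exact hxE
  · intro x hx
    show x ∈ E
    rw [← hWE]
    exact hx

end Centralizing

theorem exists_coatom_of_finite {A : Type*} {M : Type*} [Ring A] [AddCommGroup M] [Module A M]
    [Module.Finite A M] [Nontrivial M] : ∃ P : Submodule A M, IsCoatom P := by
  haveI : IsCoatomic (Submodule A M) :=
    CompleteLattice.coatomic_of_top_compact ((Submodule.fg_iff_compact ⊤).mp Module.Finite.fg_top)
  rcases eq_top_or_exists_le_coatom (⊥ : Submodule A M) with h | ⟨P, hP, -⟩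
  · obtain ⟨x, hx⟩ := exists_ne (0 : M)
    exact absurd ((h ▸ Submodule.mem_top : x ∈ (⊥ : Submodule A M))) (by simpa using hx)
  · exact ⟨P, hP⟩

universe u₁ u₂ u₃

theorem diamond_of_centralizing {A : Type u₁} {R : Type u₂} [Ring A] [Ring R]
    (f : A →+* R) {n : ℕ} (y : Fin n → R)
    (hc : ∀ (i : Fin n) (a : A), f a * y i = y i * f a)
    (hy : ∀ r : R, ∃ a : Fin n → A, r = ∑ i, f (a i) * y i)
    (hA : Diamond.{u₁, u₃} A) : Diamond.{u₂, u₃} R := by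
  intro M _ _ hfin E hE hess
  letI : Module A M := Module.compHom M f
  have hsm : ∀ (a : A) (m : M), a • m = f a • m := fun _ _ => rfl
  -- M is finitely generated over A
  obtain ⟨m', g, hg⟩ := Module.Finite.exists_fin (R := R) (M := M)
  haveI hfinA : Module.Finite A M :=
    Module.finite_def.mpr (by
      rw [← span_smul_top f y hsm hc hy g hg]
      exact Submodule.fg_span (Set.finite_range _))
  -- E is an atom
  have hEatom : IsAtom E := isSimpleModule_iff_isAtom.mp hE
  obtain ⟨e, heE, he⟩ := (Submodule.ne_bot_iff E).mp hEatom.1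
  -- the A-submodule FE corresponding to E
  set FE : Submodule A M := toA f hsm E with hFE
  haveI : Module.Finite A FE :=
    Module.Finite.iff_fg.mpr (by
      rw [hFE, toA_eq_span f y hsm hc hy hEatom heE he]
      exact Submodule.fg_span (Set.finite_range _))
  haveI : Nontrivial FE :=
    ⟨⟨e, heE⟩, 0, by simp [he, Subtype.ext_iff]⟩
  -- a maximal A-submodule of FE
  obtain ⟨P', hP'⟩ := exists_coatom_of_finite (A := A) (M := FE)
  haveI hsimpleQ : IsSimpleModule A (FE ⧸ P') := isSimpleModule_iff_isCoatom.mpr hP'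
  set P : Submodule A M := P'.map FE.subtype with hPdef
  have hPE : ∀ x ∈ P, x ∈ E := by
    intro x hx
    obtain ⟨z, _, rfl⟩ := hx
    exact z.2
  -- the trough of P is trivial
  have hK'le : troughSub (R := R) P ≤ E := fun m hm => hPE m (troughSub_le hm)
  have hK'ne : troughSub (R := R) P ≠ E := by
    intro hEq
    apply hP'.1
    rw [eq_top_iff]
    rintro z -
    have hz : (z : M) ∈ troughSub (R := R) P := by
      rw [hEq]; exact z.2
    have hzP : (z : M) ∈ P := troughSub_le hz
    obtain ⟨z', hz', hzz⟩ := hzP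
    have : z' = z := Subtype.ext hzz
    rwa [← this]
  have hK'bot : troughSub (R := R) P = ⊥ := hEatom.2 _ (lt_of_le_of_ne hK'le hK'ne)
  -- FE embeds into a finite power of the simple module FE⧸P'
  have hyFE : ∀ (i : Fin n) (x : FE), y i • (x : M) ∈ FE := fun i x => E.smul_mem _ x.2
  let Li' : Fin n → (FE →ₗ[A] FE) := fun i =>
    { toFun := fun x => ⟨y i • (x : M), hyFE i x⟩
      map_add' := fun x z => Subtype.ext (by simp [smul_add])
      map_smul' := fun a x => Subtype.ext (by
        simp only [RingHom.id_apply, Submodule.coe_smul, SetLike.val_smul]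
        exact ycomm f y hsm hc i a (x : M)) }
  let θ : FE →ₗ[A] (Fin n → FE ⧸ P') := LinearMap.pi fun i => P'.mkQ.comp (Li' i)
  have hθ : Function.Injective θ := by
    rw [← LinearMap.ker_eq_bot, eq_bot_iff]
    intro x hx
    have hx0 : ∀ i : Fin n, y i • (x : M) ∈ P := by
      intro i
      have h1 : θ x i = 0 := by rw [LinearMap.mem_ker.mp hx]; rfl
      have h2 : Li' i x ∈ P' := by
        have := h1
        rwa [show θ x i = P'.mkQ (Li' i x) from rfl, Submodule.mkQ_apply,
          Submodule.Quotient.mk_eq_zero] at this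
      exact ⟨Li' i x, h2, rfl⟩
    have : (x : M) ∈ troughSub (R := R) P := mem_troughSub_of f y hsm hy hx0
    rw [hK'bot, Submodule.mem_bot] at this
    exact (Submodule.mem_bot _).mpr (Subtype.ext this)
  haveI : IsArtinian A (FE ⧸ P') := inferInstance
  haveI hartFE : IsArtinian A FE := isArtinian_of_injective θ hθ
  -- a simple A-submodule S of E
  haveI : IsAtomic (Submodule A FE) := isAtomic_of_orderBot_wellFounded_lt hartFE.wf
  have htopne : (⊤ : Submodule A FE) ≠ ⊥ := by
    intro h
    obtain ⟨x, hxne⟩ := exists_ne (0 : FE)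
    exact hxne (by simpa using (h ▸ Submodule.mem_top : x ∈ (⊥ : Submodule A FE)))
  obtain ⟨S', hS', -⟩ :=
    (IsAtomic.eq_bot_or_exists_atom_le (⊤ : Submodule A FE)).resolve_left htopne
  set S : Submodule A M := S'.map FE.subtype with hSdef
  have hSatom : IsAtom S := by
    constructor
    · intro h
      apply hS'.1
      apply Submodule.map_injective_of_injective (Submodule.injective_subtype FE)
      rw [← hSdef, h, Submodule.map_bot]
    · intro B hB
      have hBle : B ≤ FE := le_trans hB.le (Submodule.map_subtype_le _ _)
      have hBmap : (B.comap FE.subtype).map FE.subtype = B := by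
        rw [Submodule.map_comap_subtype, inf_eq_right.mpr hBle]
      have hlt : B.comap FE.subtype < S' := by
        rw [lt_iff_le_and_ne]
        constructor
        · rw [← Submodule.map_le_map_iff_of_injective (Submodule.injective_subtype FE), hBmap]
          exact hB.le
        · intro h
          apply hB.ne
          rw [← hBmap, h]
      rw [← hBmap, hS'.2 _ hlt, Submodule.map_bot]
  have hSle : ∀ x ∈ S, x ∈ E := by
    intro x hx
    obtain ⟨z, _, rfl⟩ := hx
    exact z.2
  -- Zorn: a maximal A-submodule K with K ⊓ S = ⊥
  obtain ⟨Kmax, -, hKmem, hKmax⟩ :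
      ∃ Kmax, ⊥ ≤ Kmax ∧ Kmax ⊓ S = ⊥ ∧ ∀ z, z ⊓ S = ⊥ → Kmax ≤ z → z ≤ Kmax := by
    obtain ⟨m0, hm0, hmax⟩ := zorn_le_nonempty₀ {K : Submodule A M | K ⊓ S = ⊥}
      (fun c hc hchain z hz => by
        refine ⟨sSup c, ?_, fun w hw => le_sSup hw⟩
        rw [Set.mem_setOf_eq, eq_bot_iff]
        rintro x ⟨hx1, hx2⟩
        obtain ⟨N, hN, hxN⟩ :=
          (Submodule.mem_sSup_of_directed ⟨z, hz⟩ hchain.directedOn).mp hx1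
        have : x ∈ N ⊓ S := ⟨hxN, hx2⟩
        rwa [hc hN] at this)
      ⊥ (by simp)
    exact ⟨m0, hm0, hmax.1, fun z hzS hle => hmax.2 hzS hle⟩
  -- the quotient M ⧸ Kmax is an essential extension of a simple module, hence Artinian
  haveI hfinQ : Module.Finite A (M ⧸ Kmax) :=
    Module.Finite.of_surjective Kmax.mkQ (Submodule.Quotient.mk_surjective _)
  set E' : Submodule A (M ⧸ Kmax) := S.map Kmax.mkQ with hE'def
  have hsimpleE' : IsSimpleModule A E' := by
    let ψ : S →ₗ[A] (M ⧸ Kmax) := Kmax.mkQ.comp S.subtype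
    have hψinj : Function.Injective ψ := by
      rw [← LinearMap.ker_eq_bot, eq_bot_iff]
      intro x hx
      have hx0 : (x : M) ∈ Kmax := by
        have := LinearMap.mem_ker.mp hx
        rwa [LinearMap.comp_apply, Submodule.mkQ_apply, Submodule.Quotient.mk_eq_zero] at this
      have : (x : M) ∈ Kmax ⊓ S := ⟨hx0, x.2⟩
      rw [hKmem, Submodule.mem_bot] at this
      exact (Submodule.mem_bot _).mpr (Subtype.ext this)
    have hrange : LinearMap.range ψ = E' := by
      rw [hE'def, LinearMap.range_comp, Submodule.range_subtype]
    haveI hsimpS : IsSimpleModule A S := isSimpleModule_iff_isAtom.mpr hSatom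
    haveI : IsSimpleModule A (LinearMap.range ψ) :=
      IsSimpleModule.congr (LinearEquiv.ofInjective ψ hψinj).symm
    rw [← hrange]
    infer_instance
  have hessE' : ∀ N' : Submodule A (M ⧸ Kmax), N' ≠ ⊥ → N' ⊓ E' ≠ ⊥ := by
    intro N' hN'
    set N : Submodule A M := N'.comap Kmax.mkQ with hNdef
    have hKN : Kmax ≤ N := by
      intro x hx
      have : Kmax.mkQ x = 0 := by rwa [Submodule.mkQ_apply, Submodule.Quotient.mk_eq_zero]
      show Kmax.mkQ x ∈ N'
      rw [this]
      exact N'.zero_mem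
    have hNS : N ⊓ S ≠ ⊥ := by
      intro hbot
      apply hN'
      have hNK : N = Kmax := le_antisymm (hKmax N hbot hKN) hKN
      have : N' = N.map Kmax.mkQ := by
        rw [hNdef, Submodule.map_comap_eq_of_surjective (Submodule.Quotient.mk_surjective _)]
      rw [this, hNK, eq_bot_iff]
      rintro q ⟨x, hxK, rfl⟩
      rw [Submodule.mem_bot, Submodule.mkQ_apply, Submodule.Quotient.mk_eq_zero]
      exact hxK
    obtain ⟨x, hx, hxne⟩ := (Submodule.ne_bot_iff _).mp hNS
    rw [Submodule.ne_bot_iff]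
    refine ⟨Kmax.mkQ x, ⟨hx.1, Submodule.mem_map_of_mem hx.2⟩, ?_⟩
    intro h0
    rw [Submodule.mkQ_apply, Submodule.Quotient.mk_eq_zero] at h0
    have : x ∈ Kmax ⊓ S := ⟨h0, hx.2⟩
    rw [hKmem] at this
    exact hxne this
  haveI hartQ : IsArtinian A (M ⧸ Kmax) := hA (M ⧸ Kmax) hfinQ E' hsimpleE' hessE'
  -- M embeds into (M ⧸ Kmax)ⁿ over A
  let Li : Fin n → (M →ₗ[A] M) := fun i =>
    { toFun := fun m => y i • m
      map_add' := fun m m' => smul_add _ _ _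
      map_smul' := fun a m => by
        simp only [RingHom.id_apply]
        exact ycomm f y hsm hc i a m }
  let Φ : M →ₗ[A] (Fin n → M ⧸ Kmax) := LinearMap.pi fun i => Kmax.mkQ.comp (Li i)
  have hΦ : Function.Injective Φ := by
    rw [← LinearMap.ker_eq_bot, eq_bot_iff]
    intro m hm
    have hm0 : ∀ i : Fin n, y i • m ∈ Kmax := by
      intro i
      have h1 : Φ m i = 0 := by rw [LinearMap.mem_ker.mp hm]; rfl
      rwa [show Φ m i = Kmax.mkQ (y i • m) from rfl, Submodule.mkQ_apply,
        Submodule.Quotient.mk_eq_zero] at h1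
    have hmK : m ∈ troughSub (R := R) Kmax := mem_troughSub_of f y hsm hy hm0
    -- the trough of Kmax is trivial since it is an R-submodule avoiding E
    have hKE : troughSub (R := R) Kmax ⊓ E = ⊥ := by
      by_contra hne
      have hEle : E ≤ troughSub (R := R) Kmax := by
        have hle : troughSub (R := R) Kmax ⊓ E ≤ E := inf_le_right
        rcases lt_or_eq_of_le hle with hlt | heq
        · exact absurd (hEatom.2 _ hlt) hne
        · rw [← heq]; exact inf_le_left
      have hSbot : S = ⊥ := by
        rw [eq_bot_iff]
        intro x hx
        have hxE : x ∈ E := hSle x hx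
        have hxK : x ∈ Kmax := troughSub_le (hEle hxE)
        have : x ∈ Kmax ⊓ S := ⟨hxK, hx⟩
        rwa [hKmem] at this
      exact hSatom.1 hSbot
    have hbot : troughSub (R := R) Kmax = ⊥ := by
      by_contra hne
      exact hess _ hne hKE
    rw [hbot] at hmK
    simpa using hmK
  haveI hartA : IsArtinian A M := isArtinian_of_injective Φ hΦ
  -- transfer Artinianness from A to R
  constructor
  refine Subrelation.wf (r := InvImage (· < ·) (toA f hsm)) ?_ (InvImage.wf _ hartA.wf)
  intro N N' hlt
  show toA f hsm N < toA f hsm N'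
  exact lt_of_le_of_ne (fun x hx => hlt.le hx)
    (fun heq => hlt.ne (toA_injective f hsm heq))

/-- if an algebra `A` over a field `k` satisfies (◇) and `C` is a
finite-dimensional `k`-algebra, then `C ⊗ₖ A` satisfies (◇). -/
theorem diamond_tensor_finiteDimensional (k : Type u) [Field k]
    (A : Type v) [Ring A] [Algebra k A]
    (C : Type w) [Ring C] [Algebra k C] [FiniteDimensional k C]
    (hA : Diamond.{v, max v w} A) :
    Diamond.{max v w, max v w} (C ⊗[k] A) := by
  set b := Module.finBasis k C with hb
  set n := Module.finrank k C
  set f : A →+* C ⊗[k] A := (Algebra.TensorProduct.includeRight : A →ₐ[k] C ⊗[k] A).toRingHom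
    with hf
  set y : Fin n → C ⊗[k] A := fun i => (b i) ⊗ₜ[k] (1 : A) with hy
  have hc : ∀ (i : Fin n) (a : A), f a * y i = y i * f a := by
    intro i a
    simp [hf, hy, Algebra.TensorProduct.tmul_mul_tmul]
  have hspan : ∀ r : C ⊗[k] A, ∃ a : Fin n → A, r = ∑ i, f (a i) * y i := by
    have key : ∀ r : C ⊗[k] A, ∃ a : Fin n → A, r = ∑ i, (b i) ⊗ₜ[k] (a i) := by
      intro r
      induction r using TensorProduct.induction_on with
      | zero => exact ⟨0, by simp⟩
      | tmul c a0 =>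
        refine ⟨fun i => b.repr c i • a0, ?_⟩
        calc c ⊗ₜ[k] a0 = (∑ i, b.repr c i • b i) ⊗ₜ[k] a0 := by rw [Module.Basis.sum_repr]
          _ = ∑ i, (b.repr c i • b i) ⊗ₜ[k] a0 := by rw [TensorProduct.sum_tmul]
          _ = ∑ i, (b i) ⊗ₜ[k] (b.repr c i • a0) := by
              refine Finset.sum_congr rfl fun i _ => ?_
              rw [TensorProduct.smul_tmul]
      | add u v ihu ihv =>
        obtain ⟨au, hu⟩ := ihu
        obtain ⟨av, hv⟩ := ihv
        exact ⟨au + av, by simp [hu, hv, TensorProduct.tmul_add, Finset.sum_add_distrib]⟩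
    intro r
    obtain ⟨a, ha⟩ := key r
    refine ⟨a, ?_⟩
    rw [ha]
    refine Finset.sum_congr rfl fun i _ => ?_
    simp [hf, hy, Algebra.TensorProduct.tmul_mul_tmul]
  exact diamond_of_centralizing f y hc hspan hA
end

section
/- Let A be an algebra over a superalgebra A = A₀ ⊕ A₁ with homogeneous superderivations ∂₁, ..., ∂_l, each locally nilpotent, such that ⋂ᵢ ker ∂ᵢ is contained in the supercenter of A, and for all i ≤ j there exists λ_{i,j} ∈ ℂ with ∂ᵢ∂ⱼ − λ_{i,j}∂ⱼ∂ᵢ ∈ span{∂₁,...,∂_{i−1}}. Then every nonzero ideal I of A with ∂ᵢ(I) ⊆ I for all i contains a nonzero element of the supercenter of A. -/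
open DirectSum

/-- The supercommutator `⟦a,b⟧` of two arbitrary elements of a superalgebra, defined by
bilinear extension of `⟦a,b⟧ = ab − (−1)^{|a||b|}ba` via the homogeneous decomposition. -/
noncomputable def superCommGen {A : Type*} [Ring A] [Algebra ℂ A]
    (𝒜 : ZMod 2 → Submodule ℂ A) [GradedAlgebra 𝒜] (a b : A) : A :=
  ∑ i : ZMod 2, ∑ j : ZMod 2,
    ((DirectSum.decompose 𝒜 a i : A) * (DirectSum.decompose 𝒜 b j : A)
      - ((-1 : ℂ) ^ (i.val * j.val)) •
        ((DirectSum.decompose 𝒜 b j : A) * (DirectSum.decompose 𝒜 a i : A)))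

/-- Membership in the supercenter `SZ(A) = {a | ⟦a,b⟧ = 0 ∀ b}`. -/
noncomputable def InSupercenter {A : Type*} [Ring A] [Algebra ℂ A]
    (𝒜 : ZMod 2 → Submodule ℂ A) [GradedAlgebra 𝒜] (a : A) : Prop :=
  ∀ b : A, superCommGen 𝒜 a b = 0

/-- a superalgebra with locally nilpotent homogeneous superderivations
`D₁, ..., D_l` whose common kernel lies in the supercenter and which satisfy
`DᵢDⱼ − λ_{i,j}DⱼDᵢ ∈ span{D₁,...,D_{i−1}}` has the property that every nonzero
`D`-stable two-sided ideal contains a nonzero supercentral element. -/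
theorem stable_ideal_meets_supercenter {A : Type*} [Ring A] [Algebra ℂ A]
    (𝒜 : ZMod 2 → Submodule ℂ A) [GradedAlgebra 𝒜]
    (l : ℕ) (D : Fin l → (A →ₗ[ℂ] A)) (d : Fin l → ZMod 2)
    (hgr : ∀ i (j : ZMod 2), ∀ a ∈ 𝒜 j, D i a ∈ 𝒜 (j + d i))
    (hder : ∀ i (j k : ZMod 2), ∀ a ∈ 𝒜 j, ∀ b ∈ 𝒜 k,
      D i (a * b) = D i a * b + ((-1 : ℂ) ^ ((d i).val * j.val)) • (a * D i b))
    (hln : ∀ i (a : A), ∃ n : ℕ, ((D i) ^ n) a = 0)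
    (hker : ∀ a : A, (∀ i, D i a = 0) → InSupercenter 𝒜 a)
    (hrel : ∀ i j : Fin l, i ≤ j → ∃ (lam : ℂ) (μ : Fin l → ℂ),
      D i ∘ₗ D j - lam • (D j ∘ₗ D i) = ∑ s ∈ Finset.univ.filter (· < i), μ s • D s)
    (I : TwoSidedIdeal A) (hI : I ≠ ⊥) (hstable : ∀ i, ∀ a ∈ I, D i a ∈ I) :
    ∃ a ∈ I, a ≠ 0 ∧ InSupercenter 𝒜 a := by
  classical
  -- extract a nonzero element of I
  have hex : ∃ x, x ∈ I ∧ x ≠ 0 := by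
    by_contra h
    push_neg at h
    apply hI
    refine SetLike.ext fun x => ⟨fun hx => ?_, fun hx => ?_⟩
    · rw [TwoSidedIdeal.mem_bot]; exact h x hx
    · rw [TwoSidedIdeal.mem_bot] at hx; simp [hx, I.zero_mem]
  obtain ⟨b0, hb0I, hb0⟩ := hex
  -- key lemma: killing D i for i < k is preserved by powers of D k
  have key : ∀ (k : Fin l) (b : A), (∀ i, i < k → D i b = 0) →
      ∀ (N : ℕ) (i : Fin l), i.val < N → i < k → ∀ m, D i (((D k) ^ m) b) = 0 := by
    intro k b hb N
    induction N with
    | zero => intro i hi; omega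
    | succ N ih =>
      intro i hiN hik m
      induction m with
      | zero => simpa using hb i hik
      | succ m hm =>
        obtain ⟨lam, μ, hEq⟩ := hrel i k hik.le
        have h1 := DFunLike.congr_fun hEq (((D k) ^ m) b)
        simp only [LinearMap.sub_apply, LinearMap.comp_apply, LinearMap.smul_apply,
          LinearMap.sum_apply] at h1
        have hRHS : (∑ x ∈ Finset.univ.filter (· < i), μ x • (D x) (((D k) ^ m) b)) = 0 := by
          apply Finset.sum_eq_zero
          intro s hs
          rw [Finset.mem_filter] at hs
          have hsN : s.val < N := lt_of_lt_of_le hs.2 (Nat.lt_succ_iff.mp hiN)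
          rw [ih s hsN (hs.2.trans hik) m, smul_zero]
        rw [hRHS, sub_eq_zero] at h1
        have : ((D k) ^ (m + 1)) b = D k (((D k) ^ m) b) := by
          rw [pow_succ']; rfl
        rw [this, h1, hm, map_zero, smul_zero]
  -- powers of derivations preserve I
  have hpowI : ∀ (k : Fin l) (b : A), b ∈ I → ∀ m, ((D k) ^ m) b ∈ I := by
    intro k b hbI m
    induction m with
    | zero => simpa using hbI
    | succ m ih =>
      have : ((D k) ^ (m + 1)) b = D k (((D k) ^ m) b) := by rw [pow_succ']; rfl
      rw [this]; exact hstable k _ ih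
  -- main induction: find nonzero element of I killed by the first k derivations
  have main : ∀ k : ℕ, k ≤ l → ∃ b, b ∈ I ∧ b ≠ 0 ∧ ∀ i : Fin l, i.val < k → D i b = 0 := by
    intro k
    induction k with
    | zero => exact fun _ => ⟨b0, hb0I, hb0, fun i hi => absurd hi (Nat.not_lt_zero _)⟩
    | succ k ih =>
      intro hk1
      obtain ⟨b, hbI, hb, hbk⟩ := ih (Nat.le_of_succ_le hk1)
      set K : Fin l := ⟨k, hk1⟩ with hK
      have hbK : ∀ i, i < K → D i b = 0 := fun i hi => hbk i hi
      have hexn : ∃ n, ((D K) ^ n) b = 0 := hln K b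
      set n := Nat.find hexn with hn
      have hn0 : n ≠ 0 := by
        intro h
        have := Nat.find_spec hexn
        rw [← hn, h] at this
        simp at this
        exact hb this
      set b' := ((D K) ^ (n - 1)) b with hb'
      have hb'0 : b' ≠ 0 := Nat.find_min hexn (Nat.sub_lt (Nat.pos_of_ne_zero hn0) one_pos)
      have hDKb' : D K b' = 0 := by
        have : D K b' = ((D K) ^ n) b := by
          rw [hb', ← Module.End.mul_apply, ← pow_succ',
            Nat.sub_add_cancel (Nat.one_le_iff_ne_zero.mpr hn0)]
        rw [this]; exact Nat.find_spec hexn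
      refine ⟨b', hpowI K b hbI (n - 1), hb'0, fun i hi => ?_⟩
      rcases Nat.lt_succ_iff_lt_or_eq.mp hi with h | h
      · exact key K b hbK (i.val + 1) i (Nat.lt_succ_self _) (Fin.lt_def.mpr h) (n - 1)
      · have : i = K := Fin.ext h
        rw [this]; exact hDKb'
  obtain ⟨b, hbI, hb, hbker⟩ := main l le_rfl
  exact ⟨b, hbI, hb, hker b fun i => hbker i i.isLt⟩
end

section
/- Let g be a finite-dimensional nilpotent Lie algebra over ℂ with lower central series refined to a chain of ideals g = gⁿ ⊃ gⁿ⁻¹ ⊃ ... ⊃ g¹ ⊃ g⁰ = 0 with [g, gⁱ] ⊆ gⁱ⁻¹ and dim(gⁱ/gⁱ⁻¹) = 1. Then every nonzero ideal of U(g) contains a nonzero central element of U(g). -/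
set_option synthInstance.maxHeartbeats 1000000
set_option maxHeartbeats 2000000

open Module

namespace IdealCentralAux

attribute [local instance] LieRing.ofAssociativeRing

variable {g : Type*} [LieRing g] [LieAlgebra ℂ g]

local notation "𝒰" => UniversalEnvelopingAlgebra ℂ g
local notation "ιU" => UniversalEnvelopingAlgebra.ι ℂ

/-- inner derivation by `u` -/
noncomputable def Dmap (u : 𝒰) : 𝒰 →ₗ[ℂ] 𝒰 :=
  LinearMap.mulLeft ℂ u - LinearMap.mulRight ℂ u

lemma Dmap_apply (u a : 𝒰) : Dmap u a = u * a - a * u := rfl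

lemma Dmap_mul (u a b : 𝒰) : Dmap u (a * b) = Dmap u a * b + a * Dmap u b := by
  simp only [Dmap_apply]; noncomm_ring

lemma Dmap_comm (y x : g) (b : 𝒰) :
    Dmap (ιU y) (Dmap (ιU x) b)
      = Dmap (ιU x) (Dmap (ιU y) b) + Dmap (ιU ⁅y, x⁆) b := by
  simp only [Dmap_apply, LieHom.map_lie, Ring.lie_def]
  noncomm_ring

lemma pow_apply_eq_zero_of_le {u : 𝒰} {a : 𝒰} {p k : ℕ} (h : (Dmap u ^ p) a = 0)
    (hpk : p ≤ k) : (Dmap u ^ k) a = 0 := by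
  obtain ⟨m, rfl⟩ := Nat.exists_eq_add_of_le hpk
  rw [add_comm, pow_add, Module.End.mul_apply, h, map_zero]

lemma exists_pow_mul_eq_zero (u a b : 𝒰) (ha : ∃ p, (Dmap u ^ p) a = 0)
    (hb : ∃ q, (Dmap u ^ q) b = 0) : ∃ k, (Dmap u ^ k) (a * b) = 0 := by
  obtain ⟨p, hp⟩ := ha
  obtain ⟨q, hq⟩ := hb
  have claim : ∀ k, (Dmap u ^ k) (a * b) ∈
      Submodule.span ℂ {x : 𝒰 | ∃ i j, i + j = k ∧ x = (Dmap u ^ i) a * (Dmap u ^ j) b} := by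
    intro k
    induction k with
    | zero => exact Submodule.subset_span ⟨0, 0, rfl, by simp⟩
    | succ k ih =>
      rw [pow_succ', Module.End.mul_apply]
      refine Submodule.span_induction
        (fun x hx => ?_) (by simp) (fun x y _ _ hx hy => by rw [map_add]; exact add_mem hx hy)
        (fun c x _ hx => by rw [map_smul]; exact Submodule.smul_mem _ _ hx) ih
      obtain ⟨i, j, hij, rfl⟩ := hx
      rw [Dmap_mul]
      refine add_mem (Submodule.subset_span ⟨i + 1, j, by omega, ?_⟩)
        (Submodule.subset_span ⟨i, j + 1, by omega, ?_⟩)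
      · rw [pow_succ', Module.End.mul_apply]
      · rw [pow_succ', Module.End.mul_apply]
  refine ⟨p + q, ?_⟩
  have h0 : {x : 𝒰 | ∃ i j, i + j = p + q ∧ x = (Dmap u ^ i) a * (Dmap u ^ j) b} ⊆ {(0 : 𝒰)} := by
    rintro x ⟨i, j, hij, rfl⟩
    have : p ≤ i ∨ q ≤ j := by omega
    rcases this with h | h
    · simp [pow_apply_eq_zero_of_le hp h]
    · simp [pow_apply_eq_zero_of_le hq h]
  have := claim (p + q)
  have h1 : Submodule.span ℂ {x : 𝒰 | ∃ i j, i + j = p + q ∧ x = (Dmap u ^ i) a * (Dmap u ^ j) b}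
      ≤ ⊥ := by
    rw [← Submodule.span_zero_singleton (R := ℂ) (M := 𝒰)]
    exact Submodule.span_mono h0
  simpa using h1 this

theorem adjoin_range_ι :
    Algebra.adjoin ℂ (Set.range (ιU : g →ₗ⁅ℂ⁆ 𝒰)) = ⊤ := by
  set S := Algebra.adjoin ℂ (Set.range (ιU : g →ₗ⁅ℂ⁆ 𝒰)) with hS
  let f : g →ₗ⁅ℂ⁆ S :=
    { toFun := fun x => ⟨ιU x, Algebra.subset_adjoin ⟨x, rfl⟩⟩
      map_add' := fun x y => by ext; simp
      map_smul' := fun c x => by ext; simp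
      map_lie' := fun {x y} => by
        ext
        simp only [LieSubalgebra.coe_bracket_of_module]
        show (ιU ⁅x, y⁆ : 𝒰) = _
        rw [LieHom.map_lie, Ring.lie_def]
        rfl }
  have key : S.val.comp (UniversalEnvelopingAlgebra.lift ℂ f) = AlgHom.id ℂ 𝒰 := by
    ext x
    simp [UniversalEnvelopingAlgebra.lift_ι_apply, f]
  rw [eq_top_iff]
  intro a _
  have : S.val ((UniversalEnvelopingAlgebra.lift ℂ f) a) = a := by
    have := congrArg (fun F => F a) key
    simpa using this
  rw [← this]
  exact ((UniversalEnvelopingAlgebra.lift ℂ f) a).2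

/-- Every element of `U(g)` commuting with the image of `g` is central. -/
theorem central_of_comm (a : 𝒰) (h : ∀ x : g, ιU x * a = a * ιU x) :
    ∀ b : 𝒰, a * b = b * a := by
  intro b
  have hb : b ∈ Algebra.adjoin ℂ (Set.range (ιU : g →ₗ⁅ℂ⁆ 𝒰)) := by
    rw [adjoin_range_ι]; trivial
  induction hb using Algebra.adjoin_induction with
  | mem x hx => obtain ⟨y, rfl⟩ := hx; exact (h y).symm
  | algebraMap r => exact (Algebra.commutes r a).symm
  | add x y _ _ hx hy => rw [mul_add, add_mul, hx, hy]
  | mul x y _ _ hx hy => rw [← mul_assoc, hx, mul_assoc, hy, ← mul_assoc]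

/-- local nilpotency of the inner derivation attached to `x : g`. -/
theorem locnil (n : ℕ) (N : ℕ → LieIdeal ℂ g) (hbot : N 0 = ⊥) (htop : N n = ⊤)
    (hcentral : ∀ i < n, ∀ x : g, ∀ y ∈ N (i + 1), ⁅x, y⁆ ∈ N i)
    (x : g) (a : 𝒰) : ∃ k, (Dmap (ιU x) ^ k) a = 0 := by
  have key : ∀ i, i ≤ n → ∀ y ∈ N i, (Dmap (ιU x) ^ i) (ιU y) = 0 := by
    intro i
    induction i with
    | zero =>
      intro _ y hy
      rw [hbot] at hy
      simp only [LieSubmodule.mem_bot] at hy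
      subst hy
      simp
    | succ i ih =>
      intro hin y hy
      rw [pow_succ, Module.End.mul_apply]
      have h1 : Dmap (ιU x) (ιU y) = ιU ⁅x, y⁆ := by
        rw [LieHom.map_lie, Ring.lie_def, Dmap_apply]
      rw [h1]
      exact ih (le_of_lt hin) _ (hcentral i hin x y hy)
  have ha : a ∈ Algebra.adjoin ℂ (Set.range (ιU : g →ₗ⁅ℂ⁆ 𝒰)) := by
    rw [adjoin_range_ι]; trivial
  induction ha using Algebra.adjoin_induction with
  | mem b hb =>
    obtain ⟨y, rfl⟩ := hb
    exact ⟨n, key n le_rfl y (htop ▸ trivial)⟩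
  | algebraMap r =>
    refine ⟨1, ?_⟩
    rw [pow_one, Dmap_apply, Algebra.commutes, sub_self]
  | add b c _ _ hb hc =>
    obtain ⟨p, hp⟩ := hb; obtain ⟨q, hq⟩ := hc
    exact ⟨max p q, by rw [map_add, pow_apply_eq_zero_of_le hp (le_max_left _ _),
      pow_apply_eq_zero_of_le hq (le_max_right _ _), add_zero]⟩
  | mul b c _ _ hb hc => exact exists_pow_mul_eq_zero _ _ _ hb hc

/-- The subspace of `g` whose image commutes with `a`. -/
noncomputable def comMod (a : 𝒰) : Submodule ℂ g :=
  LinearMap.ker ((LinearMap.mulRight ℂ a - LinearMap.mulLeft ℂ a).comp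
    (ιU : g →ₗ⁅ℂ⁆ 𝒰).toLinearMap)

lemma mem_comMod {a : 𝒰} {y : g} : y ∈ comMod a ↔ Dmap (ιU y) a = 0 := by
  simp [comMod, LinearMap.mem_ker, Dmap_apply, LinearMap.sub_apply]

/-- One step: kill one more element `x`. -/
lemma step_one (locnil : ∀ (x : g) (b : 𝒰), ∃ k, (Dmap (ιU x) ^ k) b = 0)
    (I : TwoSidedIdeal 𝒰) (s : Submodule ℂ g) (x : g)
    (hs : ∀ y ∈ s, ⁅y, x⁆ ∈ s)
    (a : 𝒰) (haI : a ∈ I) (ha0 : a ≠ 0) (hC : s ≤ comMod a) :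
    ∃ a' ∈ I, a' ≠ 0 ∧ s ≤ comMod a' ∧ x ∈ comMod a' := by
  set D := Dmap (ιU x) with hD
  have hPm : ∀ m : ℕ, (D ^ m) a ∈ I ∧ ∀ y ∈ s, Dmap (ιU y) ((D ^ m) a) = 0 := by
    intro m
    induction m with
    | zero => exact ⟨by simpa using haI, fun y hy => by simpa using mem_comMod.1 (hC hy)⟩
    | succ m ih =>
      have hm : (D ^ (m + 1)) a = D ((D ^ m) a) := by
        rw [pow_succ', Module.End.mul_apply]
      constructor
      · rw [hm, hD, Dmap_apply]
        exact I.sub_mem (I.mul_mem_left _ _ ih.1) (I.mul_mem_right _ _ ih.1)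
      · intro y hy
        rw [hm, hD, Dmap_comm, ih.2 y hy, map_zero, zero_add]
        exact ih.2 _ (hs y hy)
  have hex : ∃ k, (D ^ k) a = 0 := locnil x a
  classical
  set k := Nat.find hex with hk
  have hk0 : k ≠ 0 := by
    intro h
    have := Nat.find_spec hex
    rw [← hk, h, pow_zero] at this
    exact ha0 (by simpa using this)
  refine ⟨(D ^ (k - 1)) a, (hPm (k - 1)).1, ?_, ?_, ?_⟩
  · exact Nat.find_min hex (Nat.sub_lt (Nat.pos_of_ne_zero hk0) one_pos)
  · intro y hy
    exact mem_comMod.2 ((hPm (k - 1)).2 y hy)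
  · rw [mem_comMod, ← hD]
    have : D ((D ^ (k - 1)) a) = (D ^ k) a := by
      rw [← Module.End.mul_apply, ← pow_succ',
        Nat.sub_add_cancel (Nat.one_le_iff_ne_zero.2 hk0)]
    rw [this]
    exact Nat.find_spec hex

/-- kill a whole list of elements of `t`. -/
lemma step_list (locnil : ∀ (x : g) (b : 𝒰), ∃ k, (Dmap (ιU x) ^ k) b = 0)
    (I : TwoSidedIdeal 𝒰) (s t : Submodule ℂ g) (hst : s ≤ t)
    (hbr : ∀ y : g, ∀ z ∈ t, ⁅y, z⁆ ∈ s)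
    (L : List g) (hL : ∀ x ∈ L, x ∈ t)
    (a : 𝒰) (haI : a ∈ I) (ha0 : a ≠ 0) (hC : s ≤ comMod a) :
    ∃ a' ∈ I, a' ≠ 0 ∧ s ⊔ Submodule.span ℂ {x | x ∈ L} ≤ comMod a' := by
  induction L with
  | nil =>
    refine ⟨a, haI, ha0, ?_⟩
    have : {x : g | x ∈ ([] : List g)} = ∅ := by simp
    rw [this, Submodule.span_empty, sup_bot_eq]
    exact hC
  | cons x L ih =>
    obtain ⟨a₁, ha₁I, ha₁0, ha₁C⟩ := ih (fun z hz => hL z (List.mem_cons_of_mem _ hz))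
    have hxt : x ∈ t := hL x (List.mem_cons_self)
    obtain ⟨a₂, ha₂I, ha₂0, ha₂C, hx₂⟩ :=
      step_one locnil I (s ⊔ Submodule.span ℂ {z | z ∈ L}) x
        (fun y _ => le_sup_left (α := Submodule ℂ g) (hbr y x hxt) )
        a₁ ha₁I ha₁0 ha₁C
    refine ⟨a₂, ha₂I, ha₂0, ?_⟩
    have hset : {z : g | z ∈ x :: L} = insert x {z : g | z ∈ L} := by
      ext z; simp [List.mem_cons]
    rw [hset, Submodule.span_insert]
    refine sup_le (le_trans le_sup_left ha₂C) (sup_le ?_ (le_trans le_sup_right ha₂C))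
    rw [Submodule.span_singleton_le_iff_mem]
    exact hx₂

end IdealCentralAux

open IdealCentralAux in
/-- let `g` be a finite-dimensional nilpotent complex Lie algebra with a
refined central series `g = gⁿ ⊃ ... ⊃ g⁰ = 0`, `[g, gⁱ] ⊆ gⁱ⁻¹`, `dim(gⁱ/gⁱ⁻¹) = 1`.
Then every nonzero two-sided ideal of `U(g)` contains a nonzero central element. -/
theorem ideal_contains_central (g : Type*) [LieRing g] [LieAlgebra ℂ g]
    [FiniteDimensional ℂ g] [LieRing.IsNilpotent g]
    (n : ℕ) (N : ℕ → LieIdeal ℂ g)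
    (hbot : N 0 = ⊥) (htop : N n = ⊤)
    (hdim : ∀ i < n, finrank ℂ (N (i + 1)) = finrank ℂ (N i) + 1)
    (hcentral : ∀ i < n, ∀ x : g, ∀ y ∈ N (i + 1), ⁅x, y⁆ ∈ N i)
    (I : TwoSidedIdeal (UniversalEnvelopingAlgebra ℂ g)) (hI : I ≠ ⊥) :
    ∃ a ∈ I, a ≠ 0 ∧ ∀ b : UniversalEnvelopingAlgebra ℂ g, a * b = b * a := by
  classical
  have hln := locnil n N hbot htop hcentral
  set M : ℕ → Submodule ℂ g := fun i => ⨆ j ≤ i, (LieSubmodule.toSubmodule (N j)) with hM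
  have hMle : ∀ {j i : ℕ}, j ≤ i → (LieSubmodule.toSubmodule (N j)) ≤ M i := by
    intro j i hji
    exact le_biSup (fun j => (LieSubmodule.toSubmodule (N j))) hji
  have hMmono : ∀ {i : ℕ}, M i ≤ M (i + 1) := by
    intro i
    exact iSup₂_le fun j hj => hMle (hj.trans (Nat.le_succ i))
  have hbr : ∀ i, i < n → ∀ y : g, ∀ z, z ∈ M (i + 1) → ⁅y, z⁆ ∈ M i := by
    intro i hin y z hz
    have : M (i + 1) ≤ Submodule.comap (LieAlgebra.ad ℂ g y) (M i) := by
      refine iSup₂_le fun j hj => ?_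
      intro w hw
      rw [LieSubmodule.mem_toSubmodule _] at hw
      simp only [Submodule.mem_comap, LieAlgebra.ad_apply]
      match j, hj with
      | 0, _ =>
        rw [hbot, LieSubmodule.mem_bot] at hw
        subst hw
        simp only [lie_zero]
        exact zero_mem _
      | (j' + 1), hj =>
        have hj'n : j' < n := by omega
        have := hcentral j' hj'n y w hw
        have hle : j' ≤ i := by omega
        exact hMle hle ((LieSubmodule.mem_toSubmodule _).2 this)
    simpa only [Submodule.mem_comap, LieAlgebra.ad_apply] using this hz
  have main : ∀ i, i ≤ n → ∃ a ∈ I, a ≠ 0 ∧ M i ≤ comMod a := by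
    intro i
    induction i with
    | zero =>
      intro _
      have hex : ∃ a ∈ I, a ≠ 0 := by
        by_contra h
        push_neg at h
        refine hI (eq_bot_iff.2 ?_)
        intro x hx
        exact (TwoSidedIdeal.mem_bot _).2 (h x hx)
      obtain ⟨a, haI, ha0⟩ := hex
      refine ⟨a, haI, ha0, ?_⟩
      have : M 0 ≤ ⊥ := by
        refine iSup₂_le fun j hj => ?_
        interval_cases j
        rw [hbot]
        simp
      exact this.trans bot_le
    | succ i ih =>
      intro hin
      obtain ⟨a, haI, ha0, haC⟩ := ih (by omega)
      have hfg : (LieSubmodule.toSubmodule (N (i + 1))).FG := IsNoetherian.noetherian _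
      obtain ⟨S, hS⟩ := hfg
      obtain ⟨a', ha'I, ha'0, ha'C⟩ :=
        step_list hln I (M i) (M (i + 1)) hMmono (hbr i (by omega)) S.toList
          (fun x hx => hMle le_rfl (hS ▸ Submodule.subset_span (by simpa using hx)))
          a haI ha0 haC
      refine ⟨a', ha'I, ha'0, ?_⟩
      refine le_trans ?_ ha'C
      refine iSup₂_le fun j hj => ?_
      rcases Nat.lt_or_ge j (i + 1) with h | h
      · exact le_trans (hMle (by omega)) le_sup_left
      · have hj' : j = i + 1 := by omega
        subst hj'
        refine le_trans ?_ le_sup_right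
        rw [← hS]
        refine Submodule.span_le.2 ?_
        intro x hx
        exact Submodule.subset_span (by simpa using hx)
  obtain ⟨a, haI, ha0, haC⟩ := main n le_rfl
  refine ⟨a, haI, ha0, ?_⟩
  refine central_of_comm a fun x => ?_
  have hx : x ∈ M n := by
    refine hMle le_rfl ?_
    rw [LieSubmodule.mem_toSubmodule _, htop]
    trivial
  have := mem_comMod.1 (haC hx)
  rw [Dmap_apply, sub_eq_zero] at this
  exact this
end

section
/- Let g be a Lie algebra over ℂ with basis {e₁,...,eₙ} such that the span a of {e₃,...,eₙ} is an abelian ideal of codimension 2, and suppose [e₂, eᵢ] = 0 for some i ≥ 3 with [e₁, eᵢ] ≠ 0 and there is j ≥ 3, j ≠ i, with [e₂, eⱼ] ≠ 0 and [e₁,eᵢ], [e₂,eⱼ] linearly independent. Then ind(g) ≤ dim(g) − 3. -/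
open Module

/-- The orthogonal of a linear functional `f` with respect to the bilinear form
`(x, y) ↦ f ⁅x, y⁆`, i.e. `g^f = {x ∈ g | f [x,y] = 0 for all y}`. -/
def stabilizer {g : Type*} [LieRing g] [LieAlgebra ℂ g] (f : Module.Dual ℂ g) :
    Submodule ℂ g where
  carrier := {x | ∀ y, f ⁅x, y⁆ = 0}
  add_mem' := by intro a b ha hb y; simp [add_lie, ha y, hb y]
  zero_mem' := by intro y; simp
  smul_mem' := by intro c a ha y; simp [smul_lie, ha y]

/-- The index of a Lie algebra: `ind g = min_{f ∈ g*} dim g^f`. -/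
noncomputable def lieIndex (g : Type*) [LieRing g] [LieAlgebra ℂ g] : ℕ :=
  ⨅ f : Module.Dual ℂ g, finrank ℂ (stabilizer f)

lemma exists_dual_one_one {g : Type*} [AddCommGroup g] [Module ℂ g] (u v : g)
    (h : LinearIndependent ℂ ![u, v]) :
    ∃ f : Module.Dual ℂ g, f u = 1 ∧ f v = 1 := by
  set b := Basis.span h with hb
  set φ := b.constr ℂ (fun _ => (1:ℂ)) with hφ
  obtain ⟨f, hf⟩ := LinearMap.exists_extend φ
  refine ⟨f, ?_, ?_⟩
  · have h0 : (b 0 : g) = u := by simp [hb, Basis.span_apply]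
    have := congrArg (· (b 0)) hf
    simpa [h0, hφ] using this
  · have h1 : (b 1 : g) = v := by simp [hb, Basis.span_apply]
    have := congrArg (· (b 1)) hf
    simpa [h1, hφ] using this

/-- let `g` have a basis `e₁,...,eₙ` (here `0`-indexed) whose tail
`e₃,...,eₙ` spans an abelian ideal `a` of codimension 2, and suppose for some
`i, j ≥ 3`, `i ≠ j`: `[e₂,eᵢ] = 0`, `[e₁,eᵢ] ≠ 0`, `[e₂,eⱼ] ≠ 0` with
`[e₁,eᵢ], [e₂,eⱼ]` linearly independent.  Then `ind(g) ≤ dim(g) − 3`. -/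
theorem index_le_of_nontriangular (g : Type*) [LieRing g] [LieAlgebra ℂ g]
    (n : ℕ) (hn : 2 ≤ n) (e : Basis (Fin n) ℂ g)
    (habelian : ∀ p q : Fin n, 2 ≤ p.val → 2 ≤ q.val → ⁅e p, e q⁆ = 0)
    (hideal : ∀ x : g, ∀ m : Fin n, 2 ≤ m.val →
      ⁅x, e m⁆ ∈ Submodule.span ℂ {v : g | ∃ m' : Fin n, 2 ≤ m'.val ∧ v = e m'})
    (i j : Fin n) (hi : 2 ≤ i.val) (hj : 2 ≤ j.val) (hij : i ≠ j)
    (h2i : ⁅e ⟨1, by omega⟩, e i⁆ = 0) (h1i : ⁅e ⟨0, by omega⟩, e i⁆ ≠ 0)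
    (h2j : ⁅e ⟨1, by omega⟩, e j⁆ ≠ 0)
    (hindep : LinearIndependent ℂ ![⁅e ⟨0, by omega⟩, e i⁆, ⁅e ⟨1, by omega⟩, e j⁆]) :
    lieIndex g ≤ Module.finrank ℂ g - 3 := by
  have : FiniteDimensional ℂ g := Module.Finite.of_basis e
  set e0 : g := e ⟨0, by omega⟩ with he0
  set e1 : g := e ⟨1, by omega⟩ with he1
  obtain ⟨f, hfu, hfv⟩ := exists_dual_one_one _ _ hindep
  -- the linear map T
  set T : g →ₗ[ℂ] (Fin 3 → ℂ) :=
    { toFun := fun x => ![f ⁅x, e i⁆, f ⁅x, e j⁆, f ⁅x, e0⁆]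
      map_add' := by
        intro a b; funext k; fin_cases k <;> simp [add_lie]
      map_smul' := by
        intro c a; funext k; fin_cases k <;> simp [smul_lie] } with hT
  -- T is surjective
  have hsurj : Function.Surjective T := by
    intro w
    set t : ℂ := f ⁅e0, e j⁆ with ht
    set s : ℂ := f ⁅e1, e0⁆ with hs
    refine ⟨(w 0) • e0 + (w 1 - t * w 0) • e1 + (s * (w 1 - t * w 0) - w 2) • e i, ?_⟩
    have hii : ⁅e i, e i⁆ = 0 := lie_self _
    have hij' : ⁅e i, e j⁆ = 0 := habelian i j hi hj
    have hi0 : f ⁅e i, e0⁆ = -1 := by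
      rw [(lie_skew (e i) e0).symm, map_neg, hfu]
    funext k; fin_cases k <;>
      simp [hT, add_lie, smul_lie, h2i, hii, hij', hfu, hfv, hi0, lie_self,
        ← ht, ← hs] <;> ring
  -- stabilizer f ≤ ker T
  have hker : stabilizer f ≤ LinearMap.ker T := by
    intro x hx
    have hx' : ∀ y, f ⁅x, y⁆ = 0 := hx
    simp only [LinearMap.mem_ker]
    funext k; fin_cases k <;> simp [hT, hx']
  have hrange : finrank ℂ (LinearMap.range T) = 3 := by
    rw [LinearMap.range_eq_top.mpr hsurj]
    simp
  have hkerdim : finrank ℂ (LinearMap.ker T) = finrank ℂ g - 3 := by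
    have := LinearMap.finrank_range_add_finrank_ker T
    omega
  have hle : finrank ℂ (stabilizer f) ≤ finrank ℂ g - 3 := by
    calc finrank ℂ (stabilizer f) ≤ finrank ℂ (LinearMap.ker T) :=
          Submodule.finrank_mono hker
      _ = finrank ℂ g - 3 := hkerdim
  exact le_trans (ciInf_le (OrderBot.bddBelow _) f) hle
end

section
/- The 6-dimensional complex Lie algebra h₆ with basis {e₁,...,e₆} and nonzero brackets [e₁,e₂] = e₃, [e₁,e₄] = e₅, [e₂,e₄] = e₆ is nilpotent and has index 4 = dim(h₆) − 2. -/
open Module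

/-- Nonzero Lie brackets in coordinates for the `h₆` Lie algebra. -/
lemma bracket_formula {g : Type*} [LieRing g] [LieAlgebra ℂ g]
    (e : Basis (Fin 6) ℂ g)
    (h12 : ⁅e 0, e 1⁆ = e 2) (h14 : ⁅e 0, e 3⁆ = e 4) (h24 : ⁅e 1, e 3⁆ = e 5)
    (hzero : ∀ p q : Fin 6,
      (p, q) ∉ ({(0, 1), (1, 0), (0, 3), (3, 0), (1, 3), (3, 1)} : Set (Fin 6 × Fin 6)) →
      ⁅e p, e q⁆ = 0) (x y : g) :
    ⁅x, y⁆ = (e.repr x 0 * e.repr y 1 - e.repr x 1 * e.repr y 0) • e 2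
      + (e.repr x 0 * e.repr y 3 - e.repr x 3 * e.repr y 0) • e 4
      + (e.repr x 1 * e.repr y 3 - e.repr x 3 * e.repr y 1) • e 5 := by
  have t10 : ⁅e 1, e 0⁆ = -e 2 := by rw [← lie_skew, h12]
  have t30 : ⁅e 3, e 0⁆ = -e 4 := by rw [← lie_skew, h14]
  have t31 : ⁅e 3, e 1⁆ = -e 5 := by rw [← lie_skew, h24]
  have z00 : ⁅e 0, e 0⁆ = (0:g) := hzero 0 0 (by simp [Prod.ext_iff])
  have z02 : ⁅e 0, e 2⁆ = (0:g) := hzero 0 2 (by simp [Prod.ext_iff])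
  have z04 : ⁅e 0, e 4⁆ = (0:g) := hzero 0 4 (by simp [Prod.ext_iff])
  have z05 : ⁅e 0, e 5⁆ = (0:g) := hzero 0 5 (by simp [Prod.ext_iff])
  have z11 : ⁅e 1, e 1⁆ = (0:g) := hzero 1 1 (by simp [Prod.ext_iff])
  have z12 : ⁅e 1, e 2⁆ = (0:g) := hzero 1 2 (by simp [Prod.ext_iff])
  have z14 : ⁅e 1, e 4⁆ = (0:g) := hzero 1 4 (by simp [Prod.ext_iff])
  have z15 : ⁅e 1, e 5⁆ = (0:g) := hzero 1 5 (by simp [Prod.ext_iff])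
  have z20 : ⁅e 2, e 0⁆ = (0:g) := hzero 2 0 (by simp [Prod.ext_iff])
  have z21 : ⁅e 2, e 1⁆ = (0:g) := hzero 2 1 (by simp [Prod.ext_iff])
  have z22 : ⁅e 2, e 2⁆ = (0:g) := hzero 2 2 (by simp [Prod.ext_iff])
  have z23 : ⁅e 2, e 3⁆ = (0:g) := hzero 2 3 (by simp [Prod.ext_iff])
  have z24 : ⁅e 2, e 4⁆ = (0:g) := hzero 2 4 (by simp [Prod.ext_iff])
  have z25 : ⁅e 2, e 5⁆ = (0:g) := hzero 2 5 (by simp [Prod.ext_iff])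
  have z32 : ⁅e 3, e 2⁆ = (0:g) := hzero 3 2 (by simp [Prod.ext_iff])
  have z33 : ⁅e 3, e 3⁆ = (0:g) := hzero 3 3 (by simp [Prod.ext_iff])
  have z34 : ⁅e 3, e 4⁆ = (0:g) := hzero 3 4 (by simp [Prod.ext_iff])
  have z35 : ⁅e 3, e 5⁆ = (0:g) := hzero 3 5 (by simp [Prod.ext_iff])
  have z40 : ⁅e 4, e 0⁆ = (0:g) := hzero 4 0 (by simp [Prod.ext_iff])
  have z41 : ⁅e 4, e 1⁆ = (0:g) := hzero 4 1 (by simp [Prod.ext_iff])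
  have z42 : ⁅e 4, e 2⁆ = (0:g) := hzero 4 2 (by simp [Prod.ext_iff])
  have z43 : ⁅e 4, e 3⁆ = (0:g) := hzero 4 3 (by simp [Prod.ext_iff])
  have z44 : ⁅e 4, e 4⁆ = (0:g) := hzero 4 4 (by simp [Prod.ext_iff])
  have z45 : ⁅e 4, e 5⁆ = (0:g) := hzero 4 5 (by simp [Prod.ext_iff])
  have z50 : ⁅e 5, e 0⁆ = (0:g) := hzero 5 0 (by simp [Prod.ext_iff])
  have z51 : ⁅e 5, e 1⁆ = (0:g) := hzero 5 1 (by simp [Prod.ext_iff])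
  have z52 : ⁅e 5, e 2⁆ = (0:g) := hzero 5 2 (by simp [Prod.ext_iff])
  have z53 : ⁅e 5, e 3⁆ = (0:g) := hzero 5 3 (by simp [Prod.ext_iff])
  have z54 : ⁅e 5, e 4⁆ = (0:g) := hzero 5 4 (by simp [Prod.ext_iff])
  have z55 : ⁅e 5, e 5⁆ = (0:g) := hzero 5 5 (by simp [Prod.ext_iff])
  have hx := e.sum_repr x
  have hy := e.sum_repr y
  rw [Fin.sum_univ_six] at hx hy
  conv_lhs => rw [← hx, ← hy]
  simp only [add_lie, lie_add, smul_lie, lie_smul, h12, h14, h24, t10, t30, t31,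
    z00, z02, z04, z05, z11, z12, z14, z15, z20, z21, z22, z23, z24, z25,
    z32, z33, z34, z35, z40, z41, z42, z43, z44, z45, z50, z51, z52, z53, z54, z55,
    smul_zero, zero_add, add_zero, smul_neg]
  module
/-- the 6-dimensional complex Lie algebra `h₆` with basis `e₁,...,e₆`
(here `0`-indexed) and nonzero brackets `[e₁,e₂]=e₃`, `[e₁,e₄]=e₅`, `[e₂,e₄]=e₆`
is nilpotent and has index `4 = dim h₆ − 2`. -/
theorem h6_nilpotent_index (g : Type*) [LieRing g] [LieAlgebra ℂ g]
    (e : Basis (Fin 6) ℂ g)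
    (h12 : ⁅e 0, e 1⁆ = e 2) (h14 : ⁅e 0, e 3⁆ = e 4) (h24 : ⁅e 1, e 3⁆ = e 5)
    (hzero : ∀ p q : Fin 6,
      (p, q) ∉ ({(0, 1), (1, 0), (0, 3), (3, 0), (1, 3), (3, 1)} : Set (Fin 6 × Fin 6)) →
      ⁅e p, e q⁆ = 0) :
    LieRing.IsNilpotent g ∧ lieIndex g = 4 ∧ lieIndex g = Module.finrank ℂ g - 2 := by
  haveI : FiniteDimensional ℂ g := e.finiteDimensional_of_finite
  have key := bracket_formula e h12 h14 h24 hzero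
  have fval : ∀ (f : Module.Dual ℂ g) (x y : g), f ⁅x, y⁆ =
      (e.repr x 0 * e.repr y 1 - e.repr x 1 * e.repr y 0) * f (e 2)
      + (e.repr x 0 * e.repr y 3 - e.repr x 3 * e.repr y 0) * f (e 4)
      + (e.repr x 1 * e.repr y 3 - e.repr x 3 * e.repr y 1) * f (e 5) := by
    intro f x y
    rw [key x y]
    simp [smul_eq_mul]
  have habelian : ∀ x y z : g, ⁅x, ⁅y, z⁆⁆ = 0 := by
    intro x y z
    have hx2 : ⁅x, e 2⁆ = 0 := by
      rw [key x (e 2)]; simp [Basis.repr_self, Finsupp.single_apply]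
    have hx4 : ⁅x, e 4⁆ = 0 := by
      rw [key x (e 4)]; simp [Basis.repr_self, Finsupp.single_apply]
    have hx5 : ⁅x, e 5⁆ = 0 := by
      rw [key x (e 5)]; simp [Basis.repr_self, Finsupp.single_apply]
    rw [key y z]
    simp [lie_add, lie_smul, hx2, hx4, hx5]
  have hnil : LieRing.IsNilpotent g := by
    refine (LieModule.isNilpotent_iff ℂ g g).mpr ⟨2, ?_⟩
    have h1le : LieModule.lowerCentralSeries ℂ g g 1 ≤ LieModule.maxTrivSubmodule ℂ g g := by
      have h01 : LieModule.lowerCentralSeries ℂ g g 1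
          = ⁅(⊤ : LieIdeal ℂ g), LieModule.lowerCentralSeries ℂ g g 0⁆ :=
        LieModule.lowerCentralSeries_succ ℂ g g 0
      rw [h01, LieSubmodule.lie_le_iff]
      intro x _ m _
      rw [LieModule.mem_maxTrivSubmodule]
      intro z
      exact habelian z x m
    rw [show (2:ℕ) = 1 + 1 from rfl, eq_bot_iff, LieModule.lowerCentralSeries_succ,
      LieSubmodule.lie_le_iff]
    intro x _ m hm
    rw [LieSubmodule.mem_bot]
    exact (LieModule.mem_maxTrivSubmodule ℂ g g m).mp (h1le hm) x
  have memstab : ∀ (f : Module.Dual ℂ g) (x : g),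
      x ∈ stabilizer f ↔ ∀ y, f ⁅x, y⁆ = 0 := fun _ _ => Iff.rfl
  have hlow : ∀ f : Module.Dual ℂ g, 4 ≤ finrank ℂ (stabilizer f) := by
    intro f
    by_cases hc : f (e 2) = 0 ∧ f (e 4) = 0 ∧ f (e 5) = 0
    · have htop : stabilizer f = ⊤ := by
        rw [eq_top_iff]
        intro x _
        rw [memstab]
        intro y
        rw [fval, hc.1, hc.2.1, hc.2.2]
        ring
      rw [htop, finrank_top, finrank_eq_card_basis e]
      norm_num
    · set v : Fin 4 → g :=
        ![e 2, e 4, e 5, f (e 5) • e 0 - f (e 4) • e 1 + f (e 2) • e 3] with hv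
      have hmem : ∀ i, v i ∈ stabilizer f := by
        intro i
        rw [memstab]
        intro y
        rw [fval]
        fin_cases i <;>
          (simp [hv, Basis.repr_self, Finsupp.single_apply]; try ring)
      have hli : LinearIndependent ℂ v := by
        rw [Fintype.linearIndependent_iff]
        intro c hc0
        have hcoord : ∀ j : Fin 6, ∑ i : Fin 4, c i * e.repr (v i) j = 0 := by
          intro j
          have h' : e.repr (∑ i : Fin 4, c i • v i) j = 0 := by rw [hc0]; simp
          rw [map_sum] at h'
          simpa [Finsupp.finset_sum_apply] using h'
        have k0 := hcoord 0
        have k1 := hcoord 1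
        have k2 := hcoord 2
        have k3 := hcoord 3
        have k4 := hcoord 4
        have k5 := hcoord 5
        simp [hv, Fin.sum_univ_four, Basis.repr_self, Finsupp.single_apply]
          at k0 k1 k2 k3 k4 k5
        have hc3 : c 3 = 0 := by
          rcases k0 with h|h0
          · exact h
          rcases k1 with h|h1
          · exact h
          rcases k3 with h|h3
          · exact h
          exact absurd ⟨h3, h1, h0⟩ hc
        intro i
        fin_cases i <;> first | exact k2 | exact k4 | exact k5 | exact hc3
      have hspan : Submodule.span ℂ (Set.range v) ≤ stabilizer f := by
        rw [Submodule.span_le]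
        rintro _ ⟨i, rfl⟩
        exact hmem i
      calc (4:ℕ) = finrank ℂ (Submodule.span ℂ (Set.range v)) := by
            rw [finrank_span_eq_card hli]; simp
        _ ≤ finrank ℂ (stabilizer f) := Submodule.finrank_mono hspan
  have hup : finrank ℂ (stabilizer (e.coord 2)) = 4 := by
    have hw : LinearIndependent ℂ (fun i : Fin 4 => e (⟨(i : ℕ) + 2, by omega⟩ : Fin 6)) := by
      refine e.linearIndependent.comp _ (fun i j h => ?_)
      have h' : ((i:ℕ) + 2) = (j:ℕ) + 2 := congrArg Fin.val h
      exact Fin.ext (by omega)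
    have hstab : stabilizer (e.coord 2)
        = Submodule.span ℂ (Set.range fun i : Fin 4 => e (⟨(i : ℕ) + 2, by omega⟩ : Fin 6)) := by
      apply le_antisymm
      · intro x hx
        rw [memstab] at hx
        have h0 : e.repr x 0 = 0 := by
          have h' := hx (e 1)
          rw [fval] at h'
          simpa [Basis.coord_apply, Basis.repr_self, Finsupp.single_apply] using h'
        have h1 : e.repr x 1 = 0 := by
          have h' := hx (e 0)
          rw [fval] at h'
          simpa [Basis.coord_apply, Basis.repr_self, Finsupp.single_apply] using h'
        have hxr := e.sum_repr x
        rw [Fin.sum_univ_six, h0, h1, zero_smul, zero_smul, zero_add, zero_add] at hxr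
        rw [← hxr]
        refine Submodule.add_mem _ (Submodule.add_mem _ (Submodule.add_mem _
          (Submodule.smul_mem _ _ (Submodule.subset_span ⟨0, by congr 1⟩))
          (Submodule.smul_mem _ _ (Submodule.subset_span ⟨1, by congr 1⟩)))
          (Submodule.smul_mem _ _ (Submodule.subset_span ⟨2, by congr 1⟩)))
          (Submodule.smul_mem _ _ (Submodule.subset_span ⟨3, by congr 1⟩))
      · rw [Submodule.span_le]
        rintro _ ⟨i, rfl⟩
        rw [SetLike.mem_coe, memstab]
        intro y
        rw [fval]
        fin_cases i <;>
          simp [Basis.repr_self, Finsupp.single_apply]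
    rw [hstab, finrank_span_eq_card hw]
    simp
  have hidx : lieIndex g = 4 := by
    apply le_antisymm
    · have h := ciInf_le (f := fun f : Module.Dual ℂ g => finrank ℂ (stabilizer f))
        (OrderBot.bddBelow _) (e.coord 2)
      rw [hup] at h
      exact h
    · exact le_ciInf hlow
  refine ⟨hnil, hidx, ?_⟩
  rw [hidx, finrank_eq_card_basis e]
  simp
end
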